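/- For every k > 1 and every γ ∈ ℝ³ with |γ| ≤ 2k, the Fourier coefficient matrix of the strength satisfies ‖σ̂(γ)‖_F ≤ (1/β₃²) k^{m−2} M_EM(k) + C₂ k^{−1}. -/

import Mathlib

open MeasureTheory

noncomputable section

/-- `ℝ³` with the Euclidean structure. -/
abbrev E3 := EuclideanSpace ℝ (Fin 3)

/-- `β₃ = 1/(4π)`. -/
def beta3 : ℝ := 1 / (4 * Real.pi)

/-- Frobenius norm of a `3×3` complex matrix. -/
def frobC (A : Matrix (Fin 3) (Fin 3) ℂ) : ℝ :=
  Real.sqrt (∑ i, ∑ j, ‖A i j‖ ^ 2)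

/-- Frobenius norm of a `3×3` real matrix. -/
def frobR (A : Matrix (Fin 3) (Fin 3) ℝ) : ℝ :=
  Real.sqrt (∑ i, ∑ j, (A i j) ^ 2)

/-- Entrywise Fourier transform `σ̂(γ) = ∫_{ℝ³} σ(z) e^{−iγ·z} dz` of a matrix-valued
strength. -/
def matHat (σ : E3 → Matrix (Fin 3) (Fin 3) ℝ) (γ : E3) : Matrix (Fin 3) (Fin 3) ℂ :=
  Matrix.of fun i j => ∫ z, (σ z i j : ℂ) * Complex.exp (-Complex.I * ((inner ℝ γ z : ℝ) : ℂ))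

/-- Entrywise integral `∫_{B₁} r(z,ξ) e^{−iγ·z} dz` of the residual. -/
def rIntEM (r : E3 → E3 → Matrix (Fin 3) (Fin 3) ℂ) (ξ γ : E3) :
    Matrix (Fin 3) (Fin 3) ℂ :=
  Matrix.of fun i j =>
    ∫ z in Metric.ball (0 : E3) 1, r z ξ i j * Complex.exp (-Complex.I * ((inner ℝ γ z : ℝ) : ℂ))

/-- Correlation of electric far-field patterns of the stochastic Maxwell equations:
`F_EM(x̂,ŷ,k) = k² β₃² ‖ k^{−m} σ̂(k(x̂+ŷ)) + ∫_{B₁} r(z,−kŷ) e^{−ik(x̂+ŷ)·z} dz ‖_F`. -/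
def FEM (m : ℝ) (σ : E3 → Matrix (Fin 3) (Fin 3) ℝ)
    (r : E3 → E3 → Matrix (Fin 3) (Fin 3) ℂ) (k : ℝ) (x y : E3) : ℝ :=
  k ^ 2 * beta3 ^ 2 *
    frobC (((k ^ (-m) : ℝ) : ℂ) • matHat σ (k • (x + y)) + rIntEM r (-(k • y)) (k • (x + y)))

/-- `M_EM(k) = sup_{x̂,ŷ ∈ S²} F_EM(x̂,ŷ,k)`. -/
def MEM (m : ℝ) (σ : E3 → Matrix (Fin 3) (Fin 3) ℝ)
    (r : E3 → E3 → Matrix (Fin 3) (Fin 3) ℂ) (k : ℝ) : ℝ :=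
  sSup {v : ℝ | ∃ x y : E3, ‖x‖ = 1 ∧ ‖y‖ = 1 ∧ v = FEM m σ r k x y}

end


namespace Statement6Aux

noncomputable def toE (A : Matrix (Fin 3) (Fin 3) ℂ) : EuclideanSpace ℂ (Fin 3 × Fin 3) :=
  WithLp.toLp 2 (fun p : Fin 3 × Fin 3 => A p.1 p.2)

lemma toE_add (A B : Matrix (Fin 3) (Fin 3) ℂ) : toE (A + B) = toE A + toE B := by ext; simp [toE]
lemma toE_smul (c : ℂ) (A : Matrix (Fin 3) (Fin 3) ℂ) : toE (c • A) = c • toE A := by ext; simp [toE]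
lemma toE_neg (A : Matrix (Fin 3) (Fin 3) ℂ) : toE (-A) = - toE A := by ext; simp [toE]

lemma frobC_eq (A : Matrix (Fin 3) (Fin 3) ℂ) : frobC A = ‖toE A‖ := by
  rw [EuclideanSpace.norm_eq, frobC]
  congr 1
  rw [Fintype.sum_prod_type]
  rfl

lemma frobC_add_le (A B : Matrix (Fin 3) (Fin 3) ℂ) : frobC (A + B) ≤ frobC A + frobC B := by
  rw [frobC_eq, frobC_eq, frobC_eq, toE_add]; exact norm_add_le _ _

lemma frobC_smul (c : ℂ) (A : Matrix (Fin 3) (Fin 3) ℂ) :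
    frobC (c • A) = ‖c‖ * frobC A := by
  rw [frobC_eq, frobC_eq, toE_smul, norm_smul]

lemma frobC_neg (A : Matrix (Fin 3) (Fin 3) ℂ) : frobC (-A) = frobC A := by
  rw [frobC_eq, frobC_eq, toE_neg, norm_neg]

lemma frobC_le_sum (A : Matrix (Fin 3) (Fin 3) ℂ) :
    frobC A ≤ ∑ i, ∑ j, ‖A i j‖ := by
  rw [frobC]
  have h := Finset.sum_sq_le_sq_sum_of_nonneg
    (f := fun p : Fin 3 × Fin 3 => ‖A p.1 p.2‖) (s := Finset.univ)
    (fun i _ => norm_nonneg _)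
  calc Real.sqrt (∑ i, ∑ j, ‖A i j‖ ^ 2)
      ≤ Real.sqrt ((∑ i, ∑ j, ‖A i j‖) ^ 2) := by
        apply Real.sqrt_le_sqrt
        simpa [Fintype.sum_prod_type] using h
    _ = ∑ i, ∑ j, ‖A i j‖ := Real.sqrt_sq (by positivity)

lemma frob_integral_le {α : Type*} [MeasurableSpace α] (μ : Measure α)
    (f : α → Matrix (Fin 3) (Fin 3) ℂ)
    (hf : ∀ i j, Integrable (fun z => f z i j) μ) :
    frobC (Matrix.of fun i j => ∫ z, f z i j ∂μ) ≤ ∫ z, frobC (f z) ∂μ := by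
  set g : α → EuclideanSpace ℂ (Fin 3 × Fin 3) := fun z => toE (f z) with hg_def
  have hg : Integrable g μ := by
    have hrepr : g = fun z => ∑ p : Fin 3 × Fin 3,
        (f z p.1 p.2) • (EuclideanSpace.single p (1 : ℂ)) := by
      funext z
      ext q
      simp [g, toE, EuclideanSpace.single_apply, Pi.single_apply]
    rw [hrepr]
    exact integrable_finset_sum _ (fun p _ => (hf p.1 p.2).smul_const _)
  have hcoord : ∀ p : Fin 3 × Fin 3, (∫ z, g z ∂μ) p = ∫ z, f z p.1 p.2 ∂μ := by
    intro p
    have := (EuclideanSpace.proj (𝕜 := ℂ) p).integral_comp_comm hg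
    simpa [g, toE] using this.symm
  have heq : toE (Matrix.of fun i j => ∫ z, f z i j ∂μ) = ∫ z, g z ∂μ := by
    ext p
    rw [hcoord p]
    rfl
  rw [frobC_eq, heq]
  calc ‖∫ z, g z ∂μ‖ ≤ ∫ z, ‖g z‖ ∂μ := norm_integral_le_integral_norm _
    _ = ∫ z, frobC (f z) ∂μ := by
        congr 1; funext z; rw [frobC_eq]

lemma abs_exp_inner (γ z : E3) :
    ‖Complex.exp (-Complex.I * ((inner ℝ γ z : ℝ) : ℂ))‖ = 1 := by
  rw [Complex.norm_exp]
  simp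

lemma exists_unit_pair (v : E3) (hv : ‖v‖ ≤ 2) :
    ∃ x y : E3, ‖x‖ = 1 ∧ ‖y‖ = 1 ∧ x + y = v := by
  obtain ⟨u, hu1, hu2⟩ : ∃ u : E3, ‖u‖ = 1 ∧ (inner ℝ v u : ℝ) = 0 := by
    have hne : ((ℝ ∙ v)ᗮ : Submodule ℝ E3) ≠ ⊥ := by
      intro hbot
      have htop : (ℝ ∙ v) = ⊤ := by
        rw [← Submodule.orthogonal_orthogonal (ℝ ∙ v), hbot, Submodule.bot_orthogonal_eq_top]
      have h1 : Module.finrank ℝ (ℝ ∙ v) ≤ 1 := by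
        have := finrank_span_le_card (R := ℝ) ({v} : Set E3)
        simpa using this
      have h3 : Module.finrank ℝ E3 = 3 := finrank_euclideanSpace_fin
      rw [htop, finrank_top, h3] at h1
      omega
    obtain ⟨u₀, hu₀mem, hu₀ne⟩ := Submodule.exists_mem_ne_zero_of_ne_bot hne
    refine ⟨‖u₀‖⁻¹ • u₀, ?_, ?_⟩
    · rw [norm_smul, norm_inv, norm_norm, inv_mul_cancel₀ (norm_ne_zero_iff.2 hu₀ne)]
    · rw [real_inner_smul_right]
      have := (Submodule.mem_orthogonal _ u₀).1 hu₀mem v (Submodule.mem_span_singleton_self v)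
      rw [this, mul_zero]
  set c : ℝ := Real.sqrt (1 - ‖v‖ ^ 2 / 4) with hc
  have hv4 : ‖v‖ ^ 2 / 4 ≤ 1 := by nlinarith [norm_nonneg v]
  have hc2 : c ^ 2 = 1 - ‖v‖ ^ 2 / 4 := Real.sq_sqrt (by linarith)
  refine ⟨(1/2 : ℝ) • v + c • u, (1/2 : ℝ) • v - c • u, ?_, ?_, by module⟩
  · have : ‖(1/2 : ℝ) • v + c • u‖ ^ 2 = 1 := by
      rw [norm_add_sq_real, real_inner_smul_left, real_inner_smul_right, hu2,
        norm_smul, norm_smul, hu1]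
      simp only [norm_div, Real.norm_eq_abs, abs_one, abs_two, mul_zero, mul_one]
      rw [sq_abs, hc2]; ring
    calc ‖(1/2 : ℝ) • v + c • u‖ = Real.sqrt (‖(1/2 : ℝ) • v + c • u‖ ^ 2) :=
          (Real.sqrt_sq (norm_nonneg _)).symm
      _ = 1 := by rw [this, Real.sqrt_one]
  · have : ‖(1/2 : ℝ) • v - c • u‖ ^ 2 = 1 := by
      rw [norm_sub_sq_real, real_inner_smul_left, real_inner_smul_right, hu2,
        norm_smul, norm_smul, hu1]
      simp only [norm_div, Real.norm_eq_abs, abs_one, abs_two, mul_zero, mul_one]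
      rw [sq_abs, hc2]; ring
    calc ‖(1/2 : ℝ) • v - c • u‖ = Real.sqrt (‖(1/2 : ℝ) • v - c • u‖ ^ 2) :=
          (Real.sqrt_sq (norm_nonneg _)).symm
      _ = 1 := by rw [this, Real.sqrt_one]

lemma frobC_rIntEM_le (r : E3 → E3 → Matrix (Fin 3) (Fin 3) ℂ)
    (hr_int : ∀ ξ i j, Integrable (fun z => r z ξ i j)) (ξ γ : E3) :
    frobC (rIntEM r ξ γ) ≤ ∫ z in Metric.ball (0 : E3) 1, frobC (r z ξ) := by
  have hexp_cont : Continuous fun z : E3 =>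
      Complex.exp (-Complex.I * ((inner ℝ γ z : ℝ) : ℂ)) := by
    apply Complex.continuous_exp.comp
    exact continuous_const.mul (Complex.continuous_ofReal.comp (continuous_const.inner
      continuous_id))
  have hints : ∀ i j, Integrable
      (fun z => Complex.exp (-Complex.I * ((inner ℝ γ z : ℝ) : ℂ)) • r z ξ i j)
      (volume.restrict (Metric.ball (0 : E3) 1)) := by
    intro i j
    have h1 : Integrable (fun z => r z ξ i j)
        (volume.restrict (Metric.ball (0 : E3) 1)) := (hr_int ξ i j).restrict
    have := h1.bdd_mul hexp_cont.aestronglyMeasurable.restrict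
      (c := 1) (ae_of_all _ fun z => by
        rw [abs_exp_inner])
    simpa [smul_eq_mul] using this
  have key := frob_integral_le (volume.restrict (Metric.ball (0 : E3) 1))
    (fun z => Complex.exp (-Complex.I * ((inner ℝ γ z : ℝ) : ℂ)) • r z ξ)
    (fun i j => by simpa [Matrix.smul_apply, smul_eq_mul] using hints i j)
  have heq1 : rIntEM r ξ γ = Matrix.of fun i j =>
      ∫ z in Metric.ball (0 : E3) 1,
        (Complex.exp (-Complex.I * ((inner ℝ γ z : ℝ) : ℂ)) • r z ξ) i j := by
    rw [rIntEM]
    congr 1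
    funext i j
    congr 1
    funext z
    simp [Matrix.smul_apply, smul_eq_mul, mul_comm]
  have heq2 : ∀ z, frobC (Complex.exp (-Complex.I * ((inner ℝ γ z : ℝ) : ℂ)) • r z ξ)
      = frobC (r z ξ) := by
    intro z
    rw [frobC_smul, abs_exp_inner, one_mul]
  rw [heq1]
  calc frobC (Matrix.of fun i j => ∫ z in Metric.ball (0 : E3) 1,
        (Complex.exp (-Complex.I * ((inner ℝ γ z : ℝ) : ℂ)) • r z ξ) i j)
      ≤ ∫ z in Metric.ball (0 : E3) 1,
          frobC (Complex.exp (-Complex.I * ((inner ℝ γ z : ℝ) : ℂ)) • r z ξ) := key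
    _ = ∫ z in Metric.ball (0 : E3) 1, frobC (r z ξ) := by
        congr 1; funext z; rw [heq2]

lemma frobC_matHat_le (σ : E3 → Matrix (Fin 3) (Fin 3) ℝ) (γ : E3) :
    frobC (matHat σ γ) ≤ ∑ i, ∑ j, ∫ z, |σ z i j| := by
  refine (frobC_le_sum _).trans ?_
  apply Finset.sum_le_sum
  intro i _
  apply Finset.sum_le_sum
  intro j _
  rw [matHat]
  calc ‖∫ z, (σ z i j : ℂ) * Complex.exp (-Complex.I * ((inner ℝ γ z : ℝ) : ℂ))‖
      = ‖∫ z, (σ z i j : ℂ) * Complex.exp (-Complex.I * ((inner ℝ γ z : ℝ) : ℂ))‖ := rfl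
    _ ≤ ∫ z, ‖(σ z i j : ℂ) * Complex.exp (-Complex.I * ((inner ℝ γ z : ℝ) : ℂ))‖ :=
        norm_integral_le_integral_norm _
    _ = ∫ z, |σ z i j| := by
        congr 1; funext z
        rw [norm_mul, abs_exp_inner, mul_one]
        simp

end Statement6Aux

open Statement6Aux in

/-- For every `k > 1` and every `γ ∈ ℝ³` with `|γ| ≤ 2k`, the Fourier
coefficient matrix of the strength satisfies
`‖σ̂(γ)‖_F ≤ (1/β₃²) k^{m−2} M_EM(k) + C₂ k⁻¹`. -/
theorem statement6 (m C₂ : ℝ) (hm : -1 < m ∧ m ≤ 3) (hC₂ : 0 < C₂)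
    (σ : E3 → Matrix (Fin 3) (Fin 3) ℝ)
    (hσ_int : ∀ i j, Integrable (fun z => σ z i j))
    (hσ_supp : ∀ z ∉ Metric.ball (0 : E3) 1, σ z = 0)
    (hσ_psd : ∀ z, (σ z).IsSymm ∧ (σ z).PosSemidef)
    (r : E3 → E3 → Matrix (Fin 3) (Fin 3) ℂ)
    (hr_int : ∀ ξ i j, Integrable (fun z => r z ξ i j))
    (hr_supp : ∀ ξ : E3, ∀ z ∉ Metric.ball (0 : E3) 1, r z ξ = 0)
    (hr_bd : ∀ ξ : E3, 1 < ‖ξ‖ →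
      (∫ z in Metric.ball (0 : E3) 1, frobC (r z ξ)) ≤ C₂ * ‖ξ‖ ^ (-(m + 1)))
    (k : ℝ) (hk : 1 < k) (γ : E3) (hγ : ‖γ‖ ≤ 2 * k) :
    frobC (matHat σ γ) ≤ 1 / beta3 ^ 2 * k ^ (m - 2) * MEM m σ r k + C₂ * k⁻¹ := by
  have hk0 : (0 : ℝ) < k := by linarith
  have hbeta : (0 : ℝ) < beta3 := by rw [beta3]; positivity
  have hcpos : (0 : ℝ) < k ^ 2 * beta3 ^ 2 := by positivity
  set K : ℝ := ∑ i, ∑ j, ∫ z, |σ z i j| with hK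
  -- norm of the residual argument
  have hxi_norm : ∀ y : E3, ‖y‖ = 1 → ‖-(k • y)‖ = k := by
    intro y hy
    rw [norm_neg, norm_smul, hy, mul_one, Real.norm_eq_abs, abs_of_pos hk0]
  have hRbd : ∀ y : E3, ‖y‖ = 1 → ∀ γ' : E3,
      frobC (rIntEM r (-(k • y)) γ') ≤ C₂ * k ^ (-(m + 1)) := by
    intro y hy γ'
    refine (frobC_rIntEM_le r hr_int _ γ').trans ?_
    have := hr_bd (-(k • y)) (by rw [hxi_norm y hy]; exact hk)
    rwa [hxi_norm y hy] at this
  have hsmul_abs : ‖((k ^ (-m) : ℝ) : ℂ)‖ = k ^ (-m) := by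
    rw [Complex.norm_of_nonneg (Real.rpow_pos_of_pos hk0 _).le]
  -- bound every element of the sup set
  set S : Set ℝ := {v : ℝ | ∃ x y : E3, ‖x‖ = 1 ∧ ‖y‖ = 1 ∧ v = FEM m σ r k x y} with hS
  have hFEM_le : ∀ x y : E3, ‖x‖ = 1 → ‖y‖ = 1 →
      FEM m σ r k x y ≤ k ^ 2 * beta3 ^ 2 * (k ^ (-m) * K + C₂ * k ^ (-(m + 1))) := by
    intro x y hx hy
    rw [FEM]
    apply mul_le_mul_of_nonneg_left _ hcpos.le
    refine (frobC_add_le _ _).trans ?_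
    apply add_le_add
    · rw [frobC_smul, hsmul_abs]
      exact mul_le_mul_of_nonneg_left (frobC_matHat_le σ _)
        (Real.rpow_pos_of_pos hk0 _).le
    · exact hRbd y hy _
  have hbdd : BddAbove S := by
    refine ⟨k ^ 2 * beta3 ^ 2 * (k ^ (-m) * K + C₂ * k ^ (-(m + 1))), ?_⟩
    rintro v ⟨x, y, hx, hy, rfl⟩
    exact hFEM_le x y hx hy
  -- pick unit vectors realizing γ
  obtain ⟨x, y, hx, hy, hxy⟩ := exists_unit_pair (k⁻¹ • γ) (by
    rw [norm_smul, norm_inv, Real.norm_eq_abs, abs_of_pos hk0]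
    rw [inv_mul_le_iff₀ hk0]
    linarith)
  have hkv : k • (x + y) = γ := by
    rw [hxy, smul_smul, mul_inv_cancel₀ hk0.ne', one_smul]
  have hmem : FEM m σ r k x y ∈ S := ⟨x, y, hx, hy, rfl⟩
  have hFle : FEM m σ r k x y ≤ MEM m σ r k := le_csSup hbdd hmem
  set A : Matrix (Fin 3) (Fin 3) ℂ := matHat σ γ with hA
  set R : Matrix (Fin 3) (Fin 3) ℂ := rIntEM r (-(k • y)) γ with hR
  have hFEM_eq : FEM m σ r k x y
      = k ^ 2 * beta3 ^ 2 * frobC (((k ^ (-m) : ℝ) : ℂ) • A + R) := by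
    rw [FEM, hkv]
  have step2 : frobC (((k ^ (-m) : ℝ) : ℂ) • A + R) ≤ MEM m σ r k / (k ^ 2 * beta3 ^ 2) := by
    rw [le_div_iff₀ hcpos, mul_comm]
    rw [hFEM_eq] at hFle
    exact hFle
  have step3 : frobC R ≤ C₂ * k ^ (-(m + 1)) := hRbd y hy γ
  have step1 : k ^ (-m) * frobC A
      ≤ frobC (((k ^ (-m) : ℝ) : ℂ) • A + R) + frobC R := by
    have hdecomp : ((k ^ (-m) : ℝ) : ℂ) • A
        = (((k ^ (-m) : ℝ) : ℂ) • A + R) + (-R) := by rw [add_neg_cancel_right]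
    calc k ^ (-m) * frobC A = frobC (((k ^ (-m) : ℝ) : ℂ) • A) := by
          rw [frobC_smul, hsmul_abs]
      _ = frobC ((((k ^ (-m) : ℝ) : ℂ) • A + R) + (-R)) := by rw [← hdecomp]
      _ ≤ frobC (((k ^ (-m) : ℝ) : ℂ) • A + R) + frobC (-R) := frobC_add_le _ _
      _ = frobC (((k ^ (-m) : ℝ) : ℂ) • A + R) + frobC R := by rw [frobC_neg]
  have hmain : k ^ (-m) * frobC A
      ≤ MEM m σ r k / (k ^ 2 * beta3 ^ 2) + C₂ * k ^ (-(m + 1)) :=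
    step1.trans (add_le_add step2 step3)
  have hkm_pos : (0 : ℝ) < k ^ m := Real.rpow_pos_of_pos hk0 m
  have hself : frobC A = k ^ m * (k ^ (-m) * frobC A) := by
    rw [← mul_assoc, ← Real.rpow_add hk0, add_neg_cancel, Real.rpow_zero, one_mul]
  have e1 : k ^ m * k ^ (-(m + 1)) = k⁻¹ := by
    rw [← Real.rpow_add hk0]
    have : m + -(m + 1) = -1 := by ring
    rw [this, Real.rpow_neg_one]
  have e2 : k ^ (m - 2) = k ^ m * (k ^ (2 : ℕ))⁻¹ := by
    have h2 : m - 2 = m + -((2 : ℕ) : ℝ) := by push_cast; ring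
    rw [h2, Real.rpow_add hk0, Real.rpow_neg hk0.le, Real.rpow_natCast]
  calc frobC A = k ^ m * (k ^ (-m) * frobC A) := hself
    _ ≤ k ^ m * (MEM m σ r k / (k ^ 2 * beta3 ^ 2) + C₂ * k ^ (-(m + 1))) :=
        mul_le_mul_of_nonneg_left hmain hkm_pos.le
    _ = 1 / beta3 ^ 2 * k ^ (m - 2) * MEM m σ r k + C₂ * k⁻¹ := by
        rw [mul_add, e2, ← e1]
        field_simp
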